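/- Let G be a group equipped with a left-order < and let β ∈ G be <-cofinal with 1 < β. Then 1 < γ·β·γ⁻¹ for every γ ∈ G. -/

import Mathlib

/-- In a left-ordered group, if β is cofinal and 1 < β, then 1 < γ·β·γ⁻¹
for every γ. -/
theorem stmt_2 {G : Type*} [Group G] (r : G → G → Prop)
    (hord : IsStrictTotalOrder G r)
    (hinv : ∀ g a b : G, r a b → r (g * a) (g * b))
    (β : G)
    (hcof : ∀ h : G, ∃ m n : ℤ,
      (r (β ^ m) h ∨ β ^ m = h) ∧ (r h (β ^ n) ∨ h = β ^ n))
    (hpos : r 1 β) :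
    ∀ γ : G, r 1 (γ * β * γ⁻¹) := by
  have htrans := hord.trans
  have hirr := hord.irrefl
  -- positivity of positive nat powers of β
  have hpospow : ∀ k : ℕ, r 1 (β ^ (k + 1)) := by
    intro k
    induction k with
    | zero => simpa using hpos
    | succ k ih =>
      have h2 : r (β ^ (k + 1)) (β ^ (k + 2)) := by
        have := hinv (β ^ (k + 1)) 1 β hpos
        simpa [pow_succ] using this
      exact htrans _ _ _ ih h2
  -- monotonicity of zpowers
  have hmono : ∀ a b : ℤ, a < b → r (β ^ a) (β ^ b) := by
    intro a b hab
    set k : ℕ := (b - a - 1).toNat with hk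
    have hkz : (k : ℤ) = b - a - 1 := Int.toNat_of_nonneg (by omega)
    have := hinv (β ^ a) 1 (β ^ (k + 1)) (hpospow k)
    have e : β ^ a * β ^ (k + 1) = β ^ b := by
      rw [← zpow_natCast β (k + 1), ← zpow_add]
      congr 1
      push_cast
      omega
    simpa [e] using this
  intro γ
  rcases (show r 1 (γ * β * γ⁻¹) ∨ 1 = γ * β * γ⁻¹ ∨ r (γ * β * γ⁻¹) 1 by
      by_cases ha : r 1 (γ * β * γ⁻¹)
      · exact Or.inl ha
      by_cases hb : r (γ * β * γ⁻¹) 1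
      · exact Or.inr (Or.inr hb)
      exact Or.inr (Or.inl (hord.trichotomous 1 _ ha hb))) with h | h | h
  · exact h
  · exfalso
    have hβ : β = 1 := by
      have e : β = γ⁻¹ * (γ * β * γ⁻¹) * γ := by group
      rw [← h] at e
      simpa using e
    rw [hβ] at hpos
    exact hirr 1 hpos
  · exfalso
    -- product of negatives is negative
    have hneg : ∀ a b : G, r a 1 → r b 1 → r (a * b) 1 := by
      intro a b ha hb
      have := hinv a b 1 hb
      rw [mul_one] at this
      exact htrans _ _ _ this ha
    -- conjugates of positive powers are negative
    have hconjk : ∀ k : ℕ, r (γ * β ^ (k + 1) * γ⁻¹) 1 := by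
      intro k
      induction k with
      | zero => simpa using h
      | succ k ih =>
        have e : γ * β ^ (k + 2) * γ⁻¹ = (γ * β ^ (k + 1) * γ⁻¹) * (γ * β * γ⁻¹) := by
          rw [pow_succ]; group
        rw [e]
        exact hneg _ _ ih h
    obtain ⟨m, n, hm, hn⟩ := hcof γ⁻¹
    set K : ℕ := (n - m).toNat + 1 with hK
    have h1 : r (β ^ K * γ⁻¹) γ⁻¹ := by
      have := hinv γ⁻¹ _ _ (hconjk ((n - m).toNat))
      rw [mul_one] at this
      have e : γ⁻¹ * (γ * β ^ ((n - m).toNat + 1) * γ⁻¹) = β ^ K * γ⁻¹ := by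
        rw [hK]; group
      rwa [e] at this
    have h2 : r (β ^ K * γ⁻¹) (β ^ n) := by
      rcases hn with hn | hn
      · exact htrans _ _ _ h1 hn
      · rw [hn] at h1 ⊢; exact h1
    have h3 : r (β ^ ((K : ℤ) + m)) (β ^ n) := by
      have e : β ^ K * β ^ m = β ^ ((K : ℤ) + m) := by
        rw [← zpow_natCast β K, ← zpow_add]
      rcases hm with hm | hm
      · have := hinv (β ^ K) _ _ hm
        rw [e] at this
        exact htrans _ _ _ this h2
      · rw [← hm, e] at h2
        exact h2
    have h4 : r (β ^ n) (β ^ ((K : ℤ) + m)) := by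
      apply hmono
      have : (n - m : ℤ) ≤ ((n - m).toNat : ℤ) := Int.self_le_toNat _
      omega
    exact hirr _ (htrans _ _ _ h3 h4)
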